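/- Let Ω ⊆ ℂ be a nonempty connected open set invariant under all rotations about the origin (i.e. w ∈ Ω implies e^{iθ}w ∈ Ω for all real θ), and let g : Ω → ℂ be a holomorphic function satisfying g(e^{iθ}w) = e^{iθ} g(w) for all real θ and all w ∈ Ω. Then there exists a complex number c such that g(w) = c·w for all w ∈ Ω. -/
import Mathlib

open Complex Metric Set


/-- A holomorphic function `g` on a nonempty connected rotation-invariant
open set `Ω ⊆ ℂ` satisfying `g(e^{iθ}w) = e^{iθ} g(w)` is of the form `g(w) = c·w`. -/
theorem rotation_equivariant_holomorphic_is_linear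
    (Ω : Set ℂ) (hΩopen : IsOpen Ω) (hΩconn : IsConnected Ω)
    (hrot : ∀ w ∈ Ω, ∀ θ : ℝ, Complex.exp ((θ : ℂ) * Complex.I) * w ∈ Ω)
    (g : ℂ → ℂ) (hg : DifferentiableOn ℂ g Ω)
    (hequiv : ∀ θ : ℝ, ∀ w ∈ Ω,
      g (Complex.exp ((θ : ℂ) * Complex.I) * w)
        = Complex.exp ((θ : ℂ) * Complex.I) * g w) :
    ∃ c : ℂ, ∀ w ∈ Ω, g w = c * w := by
  -- Key: w * g'(w) = g(w) for all w ∈ Ω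
  have key : ∀ w ∈ Ω, w * deriv g w = g w := by
    intro w hw
    have hD : DifferentiableAt ℂ g w := hg.differentiableAt (hΩopen.mem_nhds hw)
    have h1 : HasDerivAt (fun z : ℂ => Complex.exp (z * Complex.I) * w)
        (Complex.exp ((0:ℂ) * Complex.I) * (1 * Complex.I) * w) 0 :=
      (((hasDerivAt_id (0:ℂ)).mul_const Complex.I).cexp).mul_const w
    have h2 : HasDerivAt (fun z : ℂ => g (Complex.exp (z * Complex.I) * w))
        (deriv g w * (Complex.exp ((0:ℂ) * Complex.I) * (1 * Complex.I) * w)) 0 := by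
      have he : Complex.exp ((0:ℂ) * Complex.I) * w = w := by simp
      have hDw : HasDerivAt g (deriv g w) (Complex.exp ((0:ℂ) * Complex.I) * w) := by
        rw [he]; exact hD.hasDerivAt
      exact HasDerivAt.comp 0 hDw h1
    have h3 : HasDerivAt (fun z : ℂ => Complex.exp (z * Complex.I) * g w)
        (Complex.exp ((0:ℂ) * Complex.I) * (1 * Complex.I) * g w) 0 :=
      (((hasDerivAt_id (0:ℂ)).mul_const Complex.I).cexp).mul_const (g w)
    have h2' := h2.comp_ofReal
    have h3' := h3.comp_ofReal
    have heq : (fun θ : ℝ => g (Complex.exp ((θ:ℂ) * Complex.I) * w))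
        = fun θ : ℝ => Complex.exp ((θ:ℂ) * Complex.I) * g w := by
      funext θ
      have hwθ := hrot w hw θ
      exact hequiv θ w hw
    rw [heq] at h2'
    have := h2'.unique h3'
    simp only [Complex.exp_zero, zero_mul, one_mul] at this
    -- this : deriv g w * (I * w) = I * g w
    rw [mul_comm]
    -- this : deriv g w * (I * w) = I * g w
    calc deriv g w * w = -Complex.I * (deriv g w * (Complex.I * w)) := by
          ring_nf; rw [Complex.I_sq]; ring
      _ = -Complex.I * (Complex.I * g w) := by rw [this]
      _ = g w := by ring_nf; rw [Complex.I_sq]; ring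
  -- pick a nonzero point of Ω
  obtain ⟨w₁, hw₁⟩ := hΩconn.nonempty
  obtain ⟨w₀, hw₀Ω, hw₀0⟩ : ∃ w₀ ∈ Ω, w₀ ≠ 0 := by
    by_cases h : w₁ = 0
    · obtain ⟨r, hr, hball⟩ := Metric.isOpen_iff.1 hΩopen w₁ hw₁
      refine ⟨w₁ + r/2, hball ?_, ?_⟩
      · simp [Metric.mem_ball, dist_eq, h]
        rw [abs_of_pos]; linarith; linarith
      · simp [h]
        intro hc
        linarith
    · exact ⟨w₁, hw₁, h⟩
  -- ball around w₀ avoiding 0 inside Ω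
  have hopen' : IsOpen (Ω ∩ {(0:ℂ)}ᶜ) := hΩopen.inter (isOpen_compl_singleton)
  obtain ⟨r, hr, hball⟩ := Metric.isOpen_iff.1 hopen' w₀ ⟨hw₀Ω, hw₀0⟩
  set c : ℂ := g w₀ * w₀⁻¹ with hc
  -- g = c * id on the ball
  have hball_eq : ∀ y ∈ Metric.ball w₀ r, g y = c * y := by
    have hconst : ∀ y ∈ Metric.ball w₀ r, g y * y⁻¹ = g w₀ * w₀⁻¹ := by
      intro y hy
      have hder : ∀ x ∈ Metric.ball w₀ r, fderivWithin ℂ (fun z => g z * z⁻¹) (Metric.ball w₀ r) x = 0 := by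
        intro x hx
        obtain ⟨hxΩ, hx0⟩ := hball hx
        have hx0' : x ≠ 0 := hx0
        have hgx : DifferentiableAt ℂ g x := hg.differentiableAt (hΩopen.mem_nhds hxΩ)
        have hd : HasDerivAt (fun z => g z * z⁻¹)
            (deriv g x * x⁻¹ + g x * (-(x^2)⁻¹)) x :=
          hgx.hasDerivAt.mul (hasDerivAt_inv hx0')
        have hz : deriv g x * x⁻¹ + g x * (-(x^2)⁻¹) = 0 := by
          rw [← key x hxΩ]; field_simp; ring
        rw [hz] at hd
        rw [fderivWithin_of_isOpen Metric.isOpen_ball hx, hd.hasFDerivAt.fderiv]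
        ext
        simp
      have hdiff : DifferentiableOn ℂ (fun z => g z * z⁻¹) (Metric.ball w₀ r) := by
        intro x hx
        obtain ⟨hxΩ, hx0⟩ := hball hx
        exact ((hg.differentiableAt (hΩopen.mem_nhds hxΩ)).mul
          (differentiableAt_inv (show x ≠ 0 from hx0))).differentiableWithinAt
      exact (convex_ball w₀ r).is_const_of_fderivWithin_eq_zero hdiff hder hy
        (Metric.mem_ball_self hr)
    intro y hy
    have hy0 : y ≠ 0 := (hball hy).2
    have := hconst y hy
    field_simp at this
    rw [hc]
    field_simp
    linear_combination this
  -- identity theorem on Ω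
  have hgA : AnalyticOnNhd ℂ g Ω := hg.analyticOnNhd hΩopen
  have hcA : AnalyticOnNhd ℂ (fun w : ℂ => c * w) Ω :=
    ((differentiable_id.const_mul c).differentiableOn).analyticOnNhd hΩopen
  have hEv : g =ᶠ[nhds w₀] (fun w => c * w) := by
    filter_upwards [Metric.ball_mem_nhds w₀ hr] with y hy using hball_eq y hy
  refine ⟨c, fun w hw => ?_⟩
  exact hgA.eqOn_of_preconnected_of_eventuallyEq hcA hΩconn.isPreconnected hw₀Ω hEv hw
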